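/- Let N ≥ 2 be an integer and let c = (c_i)_{0≤i≤N} be a differentiable solution of the N-truncated non-isolated DGED system on an interval I ⊆ ℝ. Then for every sequence (g_i)_{i≥0} of real numbers and every t ∈ I, d/dt ∑_{i=0}^N g_i c_i(t) = ∑_{k=1}^{N−1} ∑_{i=k}^{N} ∑_{j=0}^{N−k} (g_{j+k} + g_{i−k} − g_j − g_i) a(i,j;k) c_i(t) c_j(t) − g_0 ( ∑_{k=1}^{N} ∑_{j=0}^{N−k} a(k,j;k) c_k(t) c_j(t) − ∑_{k=1}^{N} ∑_{i=k}^{N} a(i,0;k) c_i(t) c_0(t) ). -/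

import Mathlib

open Finset

/-- Truncated operator `Q^N_{1,i}`. -/
noncomputable def QN1 (a : ℕ → ℕ → ℕ → ℝ) (N : ℕ) (c : ℕ → ℝ) (i : ℕ) : ℝ :=
  ∑ k ∈ Finset.Icc 1 (N - i), ∑ j ∈ Finset.Icc 0 (N - k), a (i + k) j k * c (i + k) * c j

/-- Truncated operator `Q^N_{2,i}`. -/
noncomputable def QN2 (a : ℕ → ℕ → ℕ → ℝ) (N : ℕ) (c : ℕ → ℝ) (i : ℕ) : ℝ :=
  -∑ k ∈ Finset.Icc 1 (N - i), ∑ j ∈ Finset.Icc k N, a j i k * c j * c i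

/-- Truncated operator `Q^N_{3,i}`. -/
noncomputable def QN3 (a : ℕ → ℕ → ℕ → ℝ) (N : ℕ) (c : ℕ → ℝ) (i : ℕ) : ℝ :=
  ∑ k ∈ Finset.Icc 1 i, ∑ j ∈ Finset.Icc k N, a j (i - k) k * c j * c (i - k)

/-- Truncated operator `Q^N_{4,i}`. -/
noncomputable def QN4 (a : ℕ → ℕ → ℕ → ℝ) (N : ℕ) (c : ℕ → ℝ) (i : ℕ) : ℝ :=
  -∑ k ∈ Finset.Icc 1 i, ∑ j ∈ Finset.Icc 0 (N - k), a i j k * c j * c i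


/-- `c` is a solution of the `N`-truncated non-isolated DGED system on the set `I`. -/
def IsTruncSolNon (a : ℕ → ℕ → ℕ → ℝ) (N : ℕ) (I : Set ℝ) (c : ℕ → ℝ → ℝ) : Prop :=
  ∀ t ∈ I,
    HasDerivAt (c 0) 0 t ∧
    (∀ i, 1 ≤ i → i ≤ N - 1 →
      HasDerivAt (c i)
        (QN1 a N (fun n => c n t) i + QN2 a N (fun n => c n t) i +
          QN3 a N (fun n => c n t) i + QN4 a N (fun n => c n t) i) t) ∧
    HasDerivAt (c N) (QN3 a N (fun n => c n t) N + QN4 a N (fun n => c n t) N) t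

section Aux
variable (a : ℕ → ℕ → ℕ → ℝ) (g : ℕ → ℝ) (N : ℕ) (c : ℕ → ℝ)

private lemma shiftSum (k : ℕ) (hk : k ≤ N) (F : ℕ → ℝ) :
    ∑ i ∈ Icc k N, F i = ∑ m ∈ Icc 0 (N - k), F (k + m) := by
  have h : (Icc 0 (N - k)).map (addLeftEmbedding k) = Icc k N := by
    rw [Finset.map_add_left_Icc]; congr 1 <;> omega
  rw [← h, Finset.sum_map]
  simp [addLeftEmbedding_apply]

private lemma L1 : ∑ i ∈ range (N + 1), g i * QN1 a N c i
    = ∑ k ∈ Icc 1 N, ∑ i ∈ Icc k N, ∑ j ∈ Icc 0 (N - k), g (i - k) * (a i j k * c i * c j) := by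
  simp only [QN1, Finset.mul_sum]
  rw [Finset.sum_comm' (s' := fun k => Icc 0 (N - k)) (t' := Icc 1 N)
    (h := by intro i k; simp only [mem_range, mem_Icc]; omega)]
  refine Finset.sum_congr rfl fun k hk => ?_
  simp only [mem_Icc] at hk
  rw [shiftSum N k hk.2]
  refine Finset.sum_congr rfl fun m hm => Finset.sum_congr rfl fun j hj => ?_
  rw [Nat.add_sub_cancel_left, Nat.add_comm m k]

private lemma L2 : ∑ i ∈ range (N + 1), g i * QN2 a N c i
    = -∑ k ∈ Icc 1 N, ∑ i ∈ Icc k N, ∑ j ∈ Icc 0 (N - k), g j * (a i j k * c i * c j) := by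
  have h1 : ∑ i ∈ range (N + 1), g i * QN2 a N c i
      = -∑ i ∈ range (N + 1), ∑ k ∈ Icc 1 (N - i), ∑ j ∈ Icc k N,
          g i * (a j i k * c j * c i) := by
    rw [← Finset.sum_neg_distrib]
    refine Finset.sum_congr rfl fun i _ => ?_
    simp only [QN2, mul_neg, Finset.mul_sum]
  rw [h1, neg_inj]
  rw [Finset.sum_comm' (s' := fun k => Icc 0 (N - k)) (t' := Icc 1 N)
    (h := by intro i k; simp only [mem_range, mem_Icc]; omega)]
  exact Finset.sum_congr rfl fun k _ => Finset.sum_comm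

private lemma L3 : ∑ i ∈ range (N + 1), g i * QN3 a N c i
    = ∑ k ∈ Icc 1 N, ∑ i ∈ Icc k N, ∑ j ∈ Icc 0 (N - k), g (j + k) * (a i j k * c i * c j) := by
  simp only [QN3, Finset.mul_sum]
  rw [Finset.sum_comm' (s' := fun k => Icc k N) (t' := Icc 1 N)
    (h := by intro i k; simp only [mem_range, mem_Icc]; omega)]
  refine Finset.sum_congr rfl fun k hk => ?_
  simp only [mem_Icc] at hk
  rw [shiftSum N k hk.2, Finset.sum_comm]
  refine Finset.sum_congr rfl fun i hi => Finset.sum_congr rfl fun j hj => ?_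
  rw [Nat.add_sub_cancel_left, Nat.add_comm k j]

private lemma L4 : ∑ i ∈ range (N + 1), g i * QN4 a N c i
    = -∑ k ∈ Icc 1 N, ∑ i ∈ Icc k N, ∑ j ∈ Icc 0 (N - k), g i * (a i j k * c j * c i) := by
  have h1 : ∑ i ∈ range (N + 1), g i * QN4 a N c i
      = -∑ i ∈ range (N + 1), ∑ k ∈ Icc 1 i, ∑ j ∈ Icc 0 (N - k),
          g i * (a i j k * c j * c i) := by
    rw [← Finset.sum_neg_distrib]
    refine Finset.sum_congr rfl fun i _ => ?_
    simp only [QN4, mul_neg, Finset.mul_sum]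
  rw [h1, neg_inj]
  exact Finset.sum_comm' (s' := fun k => Icc k N) (t' := Icc 1 N)
    (h := by intro i k; simp only [mem_range, mem_Icc]; omega)

private lemma key : ∑ i ∈ range (N + 1),
      g i * (QN1 a N c i + QN2 a N c i + QN3 a N c i + QN4 a N c i)
    = ∑ k ∈ Icc 1 N, ∑ i ∈ Icc k N, ∑ j ∈ Icc 0 (N - k),
        (g (j + k) + g (i - k) - g j - g i) * a i j k * c i * c j := by
  simp only [mul_add, Finset.sum_add_distrib]
  rw [L1, L2, L3, L4]
  have h : ∀ k ∈ Icc 1 N, ∀ i ∈ Icc k N, ∀ j ∈ Icc 0 (N - k),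
      (g (j + k) + g (i - k) - g j - g i) * a i j k * c i * c j
      = g (i - k) * (a i j k * c i * c j) + -(g j * (a i j k * c i * c j))
        + g (j + k) * (a i j k * c i * c j) + -(g i * (a i j k * c j * c i)) := by
    intros; ring
  rw [Finset.sum_congr rfl fun k hk => Finset.sum_congr rfl fun i hi =>
    Finset.sum_congr rfl fun j hj => h k hk i hi j hj]
  simp only [Finset.sum_add_distrib, Finset.sum_neg_distrib]

private lemma QN1_zero : QN1 a N c 0
    = ∑ k ∈ Icc 1 N, ∑ j ∈ Icc 0 (N - k), a k j k * c k * c j := by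
  simp [QN1]

private lemma QN2_zero : QN2 a N c 0
    = -∑ k ∈ Icc 1 N, ∑ i ∈ Icc k N, a i 0 k * c i * c 0 := by
  simp [QN2]

private lemma QN3_zero : QN3 a N c 0 = 0 := by simp [QN3]
private lemma QN4_zero : QN4 a N c 0 = 0 := by simp [QN4]
private lemma QN1_top : QN1 a N c N = 0 := by simp [QN1]
private lemma QN2_top : QN2 a N c N = 0 := by simp [QN2]

end Aux

/-- Proposition 4.4: the evolution of generalized moments for the truncated
non-isolated system. -/
theorem truncated_nonisolated_moment_identity
    (a : ℕ → ℕ → ℕ → ℝ) (ha : ∀ i j k, 0 ≤ a i j k)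
    (hzero : ∀ p : ℕ, 1 ≤ p → a p 0 p = 0)
    (N : ℕ) (hN : 2 ≤ N) (I : Set ℝ) (c : ℕ → ℝ → ℝ)
    (hc : IsTruncSolNon a N I c)
    (g : ℕ → ℝ) (t : ℝ) (ht : t ∈ I) :
    HasDerivAt (fun s => ∑ i ∈ Finset.range (N + 1), g i * c i s)
      ((∑ k ∈ Finset.Icc 1 (N - 1), ∑ i ∈ Finset.Icc k N, ∑ j ∈ Finset.Icc 0 (N - k),
          (g (j + k) + g (i - k) - g j - g i) * a i j k * c i t * c j t)
        - g 0 *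
          ((∑ k ∈ Finset.Icc 1 N, ∑ j ∈ Finset.Icc 0 (N - k), a k j k * c k t * c j t)
            - ∑ k ∈ Finset.Icc 1 N, ∑ i ∈ Finset.Icc k N, a i 0 k * c i t * c 0 t)) t := by
  obtain ⟨h0, hmid, htop⟩ := hc t ht
  set ct : ℕ → ℝ := fun n => c n t with hct
  set D : ℕ → ℝ := fun i =>
    if i = 0 then 0 else QN1 a N ct i + QN2 a N ct i + QN3 a N ct i + QN4 a N ct i with hD
  have hder : HasDerivAt (fun s => ∑ i ∈ Finset.range (N + 1), g i * c i s)
      (∑ i ∈ Finset.range (N + 1), g i * D i) t := by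
    refine HasDerivAt.fun_sum fun i hi => ?_
    simp only [Finset.mem_range] at hi
    rcases eq_or_ne i 0 with rfl | hi0
    · simpa [hD] using h0.const_mul (g 0)
    · rcases eq_or_ne i N with hiN | hiN
      · rw [hiN]
        have hval : D N = QN3 a N ct N + QN4 a N ct N := by
          rw [hD]
          simp only [if_neg (by omega : ¬ N = 0)]
          rw [QN1_top, QN2_top]
          ring
        rw [hval]
        exact htop.const_mul (g N)
      · have h1 : 1 ≤ i := by omega
        have h2 : i ≤ N - 1 := by omega
        have hval : D i = QN1 a N ct i + QN2 a N ct i + QN3 a N ct i + QN4 a N ct i := by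
          simp [hD, hi0]
        rw [hval]
        exact (hmid i h1 h2).const_mul (g i)
  have hsum : ∑ i ∈ Finset.range (N + 1), g i * D i
      = (∑ i ∈ Finset.range (N + 1),
          g i * (QN1 a N ct i + QN2 a N ct i + QN3 a N ct i + QN4 a N ct i))
        - g 0 * (QN1 a N ct 0 + QN2 a N ct 0 + QN3 a N ct 0 + QN4 a N ct 0) := by
    rw [Finset.sum_range_succ', Finset.sum_range_succ']
    simp only [hD]
    simp
  have hsplit : (∑ k ∈ Icc 1 N, ∑ i ∈ Icc k N, ∑ j ∈ Icc 0 (N - k),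
        (g (j + k) + g (i - k) - g j - g i) * a i j k * ct i * ct j)
      = ∑ k ∈ Icc 1 (N - 1), ∑ i ∈ Icc k N, ∑ j ∈ Icc 0 (N - k),
        (g (j + k) + g (i - k) - g j - g i) * a i j k * ct i * ct j := by
    have hNe : N = (N - 1) + 1 := by omega
    rw [hNe, Finset.sum_Icc_succ_top (by omega)]
    rw [← hNe]
    have : ∑ i ∈ Icc N N, ∑ j ∈ Icc 0 (N - N),
        (g (j + N) + g (i - N) - g j - g i) * a i j N * ct i * ct j = 0 := by
      simp [Nat.sub_self]
    rw [this, add_zero]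
  rw [hsum, key, hsplit, QN1_zero, QN2_zero, QN3_zero, QN4_zero] at hder
  convert hder using 1
  ring
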